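/- Let H be a Kreĭn space and S a quasi-pseudo-regular subspace, i.e. S is an operator range and S = R ⊕ N with R regular, N neutral, R ⊥ N. Then S + S^⊥ is closed. -/

import Mathlib

open ContinuousLinearMap

noncomputable section

namespace KreinPaper

variable {H : Type*} [NormedAddCommGroup H] [InnerProductSpace ℂ H] [CompleteSpace H]

/-- The indefinite orthogonal companion of a subspace, with respect to the
indefinite inner product `[x, y] = ⟪J x, y⟫`. -/
def kOrth (J : H →L[ℂ] H) (S : Submodule ℂ H) : Submodule ℂ H where
  carrier := {y | ∀ x ∈ S, (inner ℂ (J x) y : ℂ) = 0}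
  add_mem' := by
    intro a b ha hb x hx
    simp only [Set.mem_setOf_eq] at ha hb ⊢
    rw [inner_add_right, ha x hx, hb x hx, add_zero]
  zero_mem' := by
    intro x _
    exact inner_zero_right _
  smul_mem' := by
    intro c a ha x hx
    simp only [Set.mem_setOf_eq] at ha ⊢
    rw [inner_smul_right, ha x hx, mul_zero]

/-- A regular subspace: closed, with `R ∩ R^⊥ = 0` and `R + R^⊥ = H`. -/
def IsRegular (J : H →L[ℂ] H) (R : Submodule ℂ H) : Prop :=
  IsClosed (R : Set H) ∧ R ⊓ kOrth J R = ⊥ ∧ R ⊔ kOrth J R = ⊤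

/-- A neutral subspace: the indefinite inner product vanishes on it. -/
def IsNeutral (J : H →L[ℂ] H) (N : Submodule ℂ H) : Prop :=
  ∀ n ∈ N, (inner ℂ (J n) n : ℂ) = 0

/-- Two subspaces are orthogonal in the indefinite inner product. -/
def AreKOrth (J : H →L[ℂ] H) (A B : Submodule ℂ H) : Prop :=
  ∀ a ∈ A, ∀ b ∈ B, (inner ℂ (J a) b : ℂ) = 0

/-- An operator range: the range of a bounded operator (equivalently, of a
bounded operator on `H` itself). -/
def IsOpRange (S : Submodule ℂ H) : Prop :=
  ∃ T : H →L[ℂ] H, LinearMap.range (T : H →ₗ[ℂ] H) = S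

/-- Quasi-pseudo-regular subspace: an operator range which is the orthogonal
sum of a regular subspace and a neutral subspace. -/
def IsQpr (J : H →L[ℂ] H) (S : Submodule ℂ H) : Prop :=
  IsOpRange S ∧ ∃ R N : Submodule ℂ H,
    IsRegular J R ∧ IsNeutral J N ∧ AreKOrth J R N ∧ S = R ⊔ N

/-- Pseudo-regular subspace: a closed subspace which is the orthogonal
sum of a regular subspace and a neutral subspace. -/
def IsPseudoRegular (J : H →L[ℂ] H) (S : Submodule ℂ H) : Prop :=
  IsClosed (S : Set H) ∧ ∃ R N : Submodule ℂ H,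
    IsRegular J R ∧ IsNeutral J N ∧ AreKOrth J R N ∧ S = R ⊔ N

/-- A fundamental symmetry: a selfadjoint involution. -/
def IsFundSym (J : H →L[ℂ] H) : Prop :=
  IsSelfAdjoint J ∧ J ∘L J = ContinuousLinearMap.id ℂ H

/-- The indefinite (Kreĭn space) adjoint `A* = J A† J`. -/
def kAdj (J : H →L[ℂ] H) (A : H →L[ℂ] H) : H →L[ℂ] H :=
  J ∘L (ContinuousLinearMap.adjoint A) ∘L J

lemma mem_kOrth {J : H →L[ℂ] H} {S : Submodule ℂ H} {y : H} :
    y ∈ kOrth J S ↔ ∀ x ∈ S, (inner ℂ (J x) y : ℂ) = 0 := Iff.rfl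

lemma kOrth_isClosed (J : H →L[ℂ] H) (S : Submodule ℂ H) :
    IsClosed ((kOrth J S : Submodule ℂ H) : Set H) := by
  have h : ((kOrth J S : Submodule ℂ H) : Set H)
      = ⋂ x ∈ S, {y : H | (inner ℂ (J x) y : ℂ) = 0} := by
    ext y
    simp only [Set.mem_iInter, Set.mem_setOf_eq, SetLike.mem_coe, mem_kOrth]
  rw [h]
  exact isClosed_biInter fun x _ => isClosed_eq (innerSL ℂ (J x)).continuous continuous_const

lemma kOrth_anti (J : H →L[ℂ] H) {S T : Submodule ℂ H} (h : S ≤ T) :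
    kOrth J T ≤ kOrth J S := fun _ hy x hx => hy x (h hx)

lemma neutral_pairwise {J : H →L[ℂ] H} {N : Submodule ℂ H} (hN : IsNeutral J N) :
    ∀ m ∈ N, ∀ n ∈ N, (inner ℂ (J m) n : ℂ) = 0 := by
  intro m hm n hn
  have h1 := hN (m + n) (N.add_mem hm hn)
  have h2 := hN (m + Complex.I • n) (N.add_mem hm (N.smul_mem _ hn))
  rw [map_add, inner_add_left, inner_add_right, inner_add_right, hN m hm, hN n hn] at h1
  rw [map_add, map_smul, inner_add_left, inner_add_right, inner_add_right,
    inner_smul_left, inner_smul_right, inner_smul_left, inner_smul_right,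
    hN m hm, hN n hn, Complex.conj_I] at h2
  set a := (inner ℂ (J m) n : ℂ)
  set b := (inner ℂ (J n) m : ℂ)
  have hab : a + b = 0 := by linear_combination h1
  have hab' : Complex.I * (a - b) = 0 := by linear_combination h2
  have heq : a - b = 0 := (mul_eq_zero.mp hab').resolve_left Complex.I_ne_zero
  linear_combination hab / 2 + heq / 2

set_option maxHeartbeats 1000000 in
/-- if `S` is quasi-pseudo-regular then `S + S^⊥` is closed. -/
theorem qpr_sum_orth_closed (J : H →L[ℂ] H) (hJ : IsFundSym J)
    (S : Submodule ℂ H) (hS : IsQpr J S) :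
    IsClosed ((S ⊔ kOrth J S : Submodule ℂ H) : Set H) := by
  obtain ⟨-, R, N, ⟨hRc, hdis, hcod⟩, hN, hRN, hSRN⟩ := hS
  have hRS : R ≤ S := hSRN ▸ le_sup_left
  -- N is contained in kOrth J S
  have hNle : N ≤ kOrth J S := by
    intro n hn x hx
    rw [hSRN] at hx
    obtain ⟨r, hr, m, hm, rfl⟩ := Submodule.mem_sup.mp hx
    rw [map_add, inner_add_left, hRN r hr n hn, neutral_pairwise hN m hm n hn, add_zero]
  have hsup : S ⊔ kOrth J S = R ⊔ kOrth J S := by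
    apply le_antisymm
    · refine sup_le ?_ le_sup_right
      exact hSRN.le.trans ((sup_le_sup_left hNle R).trans
        (sup_le le_sup_left le_sup_right))
    · exact sup_le (hRS.trans le_sup_left) le_sup_right
  rw [hsup]
  -- continuous projection onto R along kOrth J R
  have hcompl : IsCompl R (kOrth J R) := ⟨disjoint_iff.mpr hdis, codisjoint_iff.mpr hcod⟩
  have hRoc : IsClosed ((kOrth J R : Submodule ℂ H) : Set H) := kOrth_isClosed J R
  obtain ⟨P, hPcoe⟩ : ∃ P : H →L[ℂ] R,
      ⇑P = R.linearProjOfIsCompl (kOrth J R) hcompl :=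
    ⟨R.linearProjOfClosedCompl (kOrth J R) hcompl hRc hRoc,
      Submodule.coe_continuous_linearProjOfClosedCompl' hcompl hRc hRoc⟩
  have hPleft : ∀ r : H, (hr : r ∈ R) → (P r : H) = r := by
    intro r hr
    rw [hPcoe]
    exact congrArg Subtype.val (Submodule.linearProjOfIsCompl_apply_left hcompl ⟨r, hr⟩)
  have hPright : ∀ s : H, s ∈ kOrth J R → P s = 0 := by
    intro s hs
    rw [hPcoe]
    exact Submodule.linearProjOfIsCompl_apply_right' hcompl (x := s) hs
  set f : H →L[ℂ] H := ContinuousLinearMap.id ℂ H - R.subtypeL.comp P with hf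
  have hfx : ∀ x : H, f x = x - (P x : H) := fun x => rfl
  have hset : ((R ⊔ kOrth J S : Submodule ℂ H) : Set H)
      = f ⁻¹' ((kOrth J S : Submodule ℂ H) : Set H) := by
    ext x
    simp only [SetLike.mem_coe, Set.mem_preimage]
    constructor
    · intro hx
      obtain ⟨r, hr, s, hs, rfl⟩ := Submodule.mem_sup.mp hx
      have hs' : s ∈ kOrth J R := kOrth_anti J hRS hs
      have : f (r + s) = s := by
        rw [hfx, map_add, hPright s hs', add_zero, hPleft r hr]
        abel
      rw [this]
      exact hs
    · intro hx
      have hx' : x = (P x : H) + f x := by rw [hfx]; abel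
      rw [hx']
      exact Submodule.mem_sup.mpr ⟨(P x : H), (P x).2, f x, hx, rfl⟩
  rw [hset]
  exact (kOrth_isClosed J S).preimage f.continuous

end KreinPaper
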